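/- Let q ≥ 2, t ≥ 1 and n ≥ 2t+2 be integers, and let x and x' be two distinct words of length n over the alphabet ℤ_q. Suppose D and D' are sets of deletion vectors for length-n words, each vector of weight at most t, with |D| = |D'| = N, such that the output set of D on x equals the output set of D' on x'. Then N ≤ V_2(n,t) − V_2(⌈n/2⌉ − 1, t). (This extends the binary uniqueness bound to arbitrary alphabet size q: the proof reduces to the binary case via the map that sends some symbols to 0 and the rest to 1, since any deletion vector turning x and x' into the same word also turns their binary images into the same word.) -/

import Mathlib

/-- Applying a deletion vector `S` (a set of coordinate positions) to a word
`x` of length `n`: delete the entries at positions in `S`, keeping the rest in order. -/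
def delWord {q n : ℕ} (x : Fin n → Fin q) (S : Finset (Fin n)) : List (Fin q) :=
  ((Finset.univ \ S).sort (· ≤ ·)).map x

/-- Binary Hamming ball volume `V₂(n,t) = ∑_{i=0}^{t} C(n,i)`. -/
def V₂ (n t : ℕ) : ℕ := ∑ i ∈ Finset.range (t + 1), n.choose i

open List Finset

/-- Generalized deletion with arbitrary codomain. -/
def delW {α : Type*} {n : ℕ} (y : Fin n → α) (S : Finset (Fin n)) : List α :=
  ((Finset.univ \ S).sort (· ≤ ·)).map y

lemma delWord_eq_delW {q n : ℕ} (x : Fin n → Fin q) (S : Finset (Fin n)) :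
    delWord x S = delW x S := rfl

lemma sorted_lt_sublist {α : Type*} [LinearOrder α] :
    ∀ {l₂ l₁ : List α}, l₁.Pairwise (· < ·) → l₂.Pairwise (· < ·) →
      (∀ a ∈ l₁, a ∈ l₂) → l₁ <+ l₂ := by
  intro l₂
  induction l₂ with
  | nil =>
    intro l₁ _ _ hsub
    cases l₁ with
    | nil => exact Sublist.refl _
    | cons a t => exact absurd (hsub a (by simp)) (by simp)
  | cons c l₂' ih =>
    intro l₁ h₁ h₂ hsub
    cases l₁ with
    | nil => exact nil_sublist _
    | cons b l₁' =>
      rcases mem_cons.mp (hsub b (by simp)) with hb | hb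
      · subst hb
        refine Sublist.cons₂ _ (ih h₁.of_cons h₂.of_cons ?_)
        intro a ha
        have hba : b < a := rel_of_pairwise_cons h₁ ha
        rcases mem_cons.mp (hsub a (by simp [ha])) with h | h
        · exact absurd h.symm (ne_of_lt hba)
        · exact h
      · refine Sublist.cons _ (ih h₁ h₂.of_cons ?_)
        intro a ha
        have hcb : c < b := rel_of_pairwise_cons h₂ hb
        rcases mem_cons.mp ha with rfl | ha'
        · exact hb
        · have hba : b < a := rel_of_pairwise_cons h₁ ha'
          rcases mem_cons.mp (hsub a ha) with h | h
          · exact absurd h.symm (ne_of_lt (hcb.trans hba))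
          · exact h

lemma sort_subset_sublist {n : ℕ} {S T : Finset (Fin n)} (h : S ⊆ T) :
    S.sort (· ≤ ·) <+ T.sort (· ≤ ·) := by
  refine sorted_lt_sublist (sortedLT_iff_pairwise.mp (Finset.sortedLT_sort S)) (sortedLT_iff_pairwise.mp (Finset.sortedLT_sort T)) ?_
  intro a ha
  rw [Finset.mem_sort] at ha ⊢
  exact h ha

lemma delW_anti {α : Type*} {n : ℕ} (y : Fin n → α) {S T : Finset (Fin n)} (h : S ⊆ T) :
    delW y T <+ delW y S :=
  Sublist.map y (sort_subset_sublist (sdiff_subset_sdiff (Finset.Subset.refl _) h))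

lemma delW_sublist_ofFn {α : Type*} {n : ℕ} (y : Fin n → α) (S : Finset (Fin n)) :
    delW y S <+ List.ofFn y := by
  have h1 : delW y S <+ delW y ∅ := delW_anti y (Finset.empty_subset S)
  have h2 : delW y (∅ : Finset (Fin n)) = List.ofFn y := by
    unfold delW
    rw [Finset.sdiff_empty, Fin.sort_univ, List.ofFn_eq_map]
  rwa [h2] at h1

lemma delW_length {α : Type*} {n : ℕ} (y : Fin n → α) (S : Finset (Fin n)) :
    (delW y S).length = n - S.card := by
  unfold delW
  rw [List.length_map, Finset.length_sort, Finset.card_sdiff_of_subset (Finset.subset_univ S)]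
  simp

lemma delW_map {α β : Type*} {n : ℕ} (y : Fin n → α) (f : α → β) (S : Finset (Fin n)) :
    delW (f ∘ y) S = (delW y S).map f := by
  unfold delW
  rw [List.map_map]

lemma delW_realize {α : Type*} {n : ℕ} (y : Fin n → α) (w : List α)
    (hw : w <+ List.ofFn y) : ∃ S : Finset (Fin n), delW y S = w := by
  rw [List.sublist_iff_exists_fin_orderEmbedding_get_eq] at hw
  obtain ⟨f, hf⟩ := hw
  have hlen : (List.ofFn y).length = n := by simp
  set F : Fin w.length → Fin n := fun i => Fin.cast hlen (f i) with hF
  have hFmono : StrictMono F := by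
    intro i j hij
    have h := f.strictMono hij
    rw [Fin.lt_def] at h ⊢
    exact h
  set K : Finset (Fin n) := Finset.univ.image F with hK
  have hKcard : K.card = w.length := by
    rw [hK, Finset.card_image_of_injective _ hFmono.injective, Finset.card_univ,
      Fintype.card_fin]
  refine ⟨Kᶜ, ?_⟩
  show ((Finset.univ \ Kᶜ).sort (· ≤ ·)).map y = w
  have hcompl : Finset.univ \ Kᶜ = K := by
    simp [Finset.sdiff_eq_inter_compl]
  rw [hcompl]
  have huniq : F = K.orderEmbOfFin hKcard :=
    Finset.orderEmbOfFin_unique hKcard (fun i => by simp [hK]) hFmono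
  apply List.ext_getElem
  · rw [List.length_map, Finset.length_sort, hKcard]
  · intro i h1 h2
    have hiw : i < w.length := h2
    have hsorti : (K.sort (· ≤ ·))[i]'(by rwa [Finset.length_sort, hKcard]) = F ⟨i, hiw⟩ := by
      have := Finset.orderEmbOfFin_apply K hKcard ⟨i, hiw⟩
      rw [huniq]
      exact this.symm
    rw [List.getElem_map, hsorti]
    have := hf ⟨i, hiw⟩
    rw [List.get_ofFn] at this
    simpa [hF] using this.symm

lemma bool_count_add : ∀ {l : List Bool} {a : Bool}, count a l + count (!a) l = l.length := by
  intro l a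
  induction l with
  | nil => simp
  | cons b t ih =>
    simp only [count_cons, length_cons]
    rcases Bool.eq_or_eq_not b a with h | h <;> subst h <;> simp <;> omega

lemma first_split {α : Type*} [DecidableEq α] {a : α} :
    ∀ {l : List α}, a ∈ l → ∃ V Z, l = V ++ a :: Z ∧ a ∉ V := by
  intro l
  induction l with
  | nil => simp
  | cons b t ih =>
    intro hmem
    by_cases hb : a = b
    · exact ⟨[], t, by simp [hb], by simp⟩
    · have : a ∈ t := by
        rcases mem_cons.mp hmem with h | h
        · exact absurd h hb
        · exact h
      obtain ⟨V, Z, hVZ, hV⟩ := ih this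
      exact ⟨b :: V, Z, by rw [hVZ]; rfl, by simp [hV, hb]⟩

lemma skip_prefix {α : Type*} {a : α} {u : List α} :
    ∀ {V Z : List α}, a ∉ V → (a :: u) <+ V ++ a :: Z → u <+ Z := by
  intro V
  induction V with
  | nil =>
    intro Z _ h
    exact h.of_cons_cons
  | cons v W ih =>
    intro Z hnot h
    rcases List.cons_sublist_cons'.mp h with h' | ⟨he, _⟩
    · exact ih (fun hmem => hnot (mem_cons_of_mem v hmem)) h'
    · exact absurd he.symm (fun hh => hnot (hh ▸ (List.mem_cons_self : v ∈ v :: W)))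

/-- Key binary witness theorem: two distinct equal-length binary words admit
"distinguishing subsequences" in both directions, with opposite first letters,
of total length at most `n + 2`. -/
theorem wit_main :
    ∀ (X X' : List Bool), X.length = X'.length → X ≠ X' →
      ∃ (b : Bool) (u u' : List Bool),
        (b :: u) <+ X ∧ ¬ (b :: u) <+ X' ∧
        ((!b) :: u') <+ X' ∧ ¬ ((!b) :: u') <+ X ∧
        u.length + u'.length ≤ X.length := by
  intro X
  induction X with
  | nil =>
    intro X' hlen hne
    cases X' with
    | nil => exact absurd rfl hne
    | cons a t => simp at hlen
  | cons a Xt ih =>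
    intro X' hlen hne
    cases X' with
    | nil => simp at hlen
    | cons a' Xt' =>
      simp only [length_cons, Nat.add_right_cancel_iff] at hlen
      by_cases haa : a = a'
      · -- equal heads: strip
        subst haa
        have hne' : Xt ≠ Xt' := fun h => hne (by rw [h])
        obtain ⟨b, u, u', h1, h2, h3, h4, h5⟩ := ih Xt' hlen hne'
        rcases Bool.eq_or_eq_not b a with rfl | hb
        · -- b = a : prepend to w
          refine ⟨b, b :: u, u', Sublist.cons₂ b h1, ?_, h3.cons b, ?_, by simp; omega⟩
          · intro h
            exact h2 h.of_cons_cons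
          · intro h
            rcases List.cons_sublist_cons'.mp h with h' | ⟨he, _⟩
            · exact h4 h'
            · simp at he
        · -- b = !a, so !b = a : prepend to w'
          have hba : (!b) = a := by rw [hb]; simp
          refine ⟨b, u, (!b) :: u', h1.cons a, ?_, ?_, ?_, by simp; omega⟩
          · intro h
            rcases List.cons_sublist_cons'.mp h with h' | ⟨he, _⟩
            · exact h2 h'
            · rw [hb] at he
              simp at he
          · rw [hba] at h3 ⊢
            exact Sublist.cons₂ a h3
          · intro h
            rcases List.cons_sublist_cons'.mp h with h' | ⟨he, h''⟩
            · exact h4 (((Sublist.cons (!b) (Sublist.refl u')).cons₂ (!b)).trans h')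
            · exact h4 h''
      · -- differing heads
        have ha' : a' = !a := by
          rcases Bool.eq_or_eq_not a' a with h | h
          · exact absurd h.symm haa
          · exact h
        subst ha'
        set X := a :: Xt with hX
        set X' := (!a) :: Xt' with hX'
        by_cases hc : count a X' < count a X
        · -- Case A : pure counting witnesses
          have hcb : count (!a) X < count (!a) X' := by
            have e1 : count a X + count (!a) X = X.length := bool_count_add
            have e2 : count a X' + count (!a) X' = X'.length := bool_count_add
            have e3 : X.length = X'.length := by simp [hX, hX', hlen]
            omega
          refine ⟨a, replicate (count a X') a, replicate (count (!a) X) (!a), ?_, ?_, ?_, ?_, ?_⟩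
          · rw [← replicate_succ]
            exact replicate_sublist_iff.mpr hc
          · intro h
            rw [← replicate_succ] at h
            have := replicate_sublist_iff.mp h
            omega
          · rw [← replicate_succ]
            exact replicate_sublist_iff.mpr hcb
          · intro h
            rw [← replicate_succ] at h
            have := replicate_sublist_iff.mp h
            omega
          · rw [length_replicate, length_replicate]
            have e1 : count a X + count (!a) X = X.length := bool_count_add
            omega
        · -- Case B : mixed witnesses using first-occurrence splits
          push_neg at hc
          have hca_pos : 1 ≤ count a X := by
            rw [hX, count_cons_self]; omega
          have hcb'_pos : 1 ≤ count (!a) X' := by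
            rw [hX', count_cons_self]; omega
          have hcb : count (!a) X' ≤ count (!a) X := by
            have e1 : count a X + count (!a) X = X.length := bool_count_add
            have e2 : count a X' + count (!a) X' = X'.length := bool_count_add
            have e3 : X.length = X'.length := by simp [hX, hX', hlen]
            omega
          have hmema : a ∈ X' := count_pos_iff.mp (by omega)
          have hmemb : (!a) ∈ X := count_pos_iff.mp (by omega)
          obtain ⟨V', Z', hVZ', hV'⟩ := first_split hmema
          obtain ⟨V, Z, hVZ, hV⟩ := first_split hmemb
          have hV'ne : V' ≠ [] := by
            intro h
            rw [h, nil_append] at hVZ'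
            rw [hX'] at hVZ'
            have : (!a) = a := by
              have := congrArg (fun l => l.head?) hVZ'
              simpa using this
            simp at this
          have hVne : V ≠ [] := by
            intro h
            rw [h, nil_append] at hVZ
            rw [hX] at hVZ
            have : a = !a := by
              have := congrArg (fun l => l.head?) hVZ
              simpa using this
            simp at this
          have hcntV' : count (!a) V' = V'.length := by
            rw [count_eq_length]
            intro b hb
            rcases Bool.eq_or_eq_not b a with rfl | h
            · exact absurd hb hV'
            · rw [h]
          have hcntV : count a V = V.length := by
            rw [count_eq_length]
            intro b hb
            rcases Bool.eq_or_eq_not b (!a) with h | h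
            · exact absurd (h ▸ hb) hV
            · rw [h]; simp
          have hZ'count : count (!a) Z' + V'.length = count (!a) X' := by
            rw [hVZ', count_append, count_cons_of_ne (by simp), hcntV']
            omega
          have hZcount : count a Z + V.length = count a X := by
            rw [hVZ, count_append, count_cons_of_ne (by simp), hcntV]
            omega
          have hV'len : 1 ≤ V'.length := by
            cases V' with
            | nil => exact absurd rfl hV'ne
            | cons _ _ => simp
          have hVlen : 1 ≤ V.length := by
            cases V with
            | nil => exact absurd rfl hVne
            | cons _ _ => simp
          refine ⟨a, replicate (count (!a) Z' + 1) (!a), replicate (count a Z + 1) a,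
            ?_, ?_, ?_, ?_, ?_⟩
          · rw [hX]
            refine Sublist.cons₂ a (replicate_sublist_iff.mpr ?_)
            have : count (!a) Xt = count (!a) X := by
              rw [hX, count_cons_of_ne (by simp)]
            omega
          · intro h
            rw [hVZ'] at h
            have := replicate_sublist_iff.mp (skip_prefix hV' h)
            omega
          · rw [hX']
            refine Sublist.cons₂ (!a) (replicate_sublist_iff.mpr ?_)
            have : count a Xt' = count a X' := by
              rw [hX', count_cons_of_ne (by simp)]
            omega
          · intro h
            rw [hVZ] at h
            have := replicate_sublist_iff.mp (skip_prefix hV h)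
            omega
          · rw [length_replicate, length_replicate]
            have e1 : count a X + count (!a) X = X.length := bool_count_add
            omega

lemma card_small_subsets {n : ℕ} (A : Finset (Fin n)) (t : ℕ) :
    ((A.powerset.filter (fun S => S.card ≤ t))).card = V₂ A.card t := by
  have hset : A.powerset.filter (fun S => S.card ≤ t)
      = (Finset.range (t+1)).biUnion (fun i => A.powersetCard i) := by
    ext S
    simp only [Finset.mem_filter, Finset.mem_powerset, Finset.mem_biUnion, Finset.mem_range,
      Finset.mem_powersetCard]
    constructor
    · rintro ⟨hsub, hle⟩
      exact ⟨S.card, by omega, hsub, rfl⟩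
    · rintro ⟨i, hi, hsub, hcard⟩
      exact ⟨hsub, by omega⟩
  rw [hset, Finset.card_biUnion]
  · unfold V₂
    exact Finset.sum_congr rfl fun i _ => Finset.card_powersetCard i A
  · intro i _ j _ hij
    refine Finset.disjoint_left.mpr ?_
    intro S hSi hSj
    rw [Finset.mem_powersetCard] at hSi hSj
    exact hij (hSi.2 ▸ hSj.2)

lemma aux_bound {q t n N : ℕ} (x x' : Fin n → Fin q) (D D' : Finset (Finset (Fin n)))
    (hD : ∀ S ∈ D, S.card ≤ t) (hDcard : D.card = N)
    (hout : D.image (delWord x) = D'.image (delWord x'))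
    (ψ : Fin q → Bool) (w : List Bool)
    (hw1 : w <+ List.ofFn (ψ ∘ x)) (hw2 : ¬ w <+ List.ofFn (ψ ∘ x'))
    (hwlen : w.length + ((n + 1) / 2 - 1) ≤ n) :
    N ≤ V₂ n t - V₂ ((n + 1) / 2 - 1) t := by
  set m := (n + 1) / 2 - 1 with hm
  obtain ⟨E, hE⟩ := delW_realize (ψ ∘ x) w hw1
  have hElen : w.length = n - E.card := by rw [← hE, delW_length]
  have hEcard : E.card ≤ n := by
    have := Finset.card_le_univ E
    simpa using this
  have hmE : m ≤ E.card := by omega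
  obtain ⟨A, hAE, hAcard⟩ := Finset.exists_subset_card_eq hmE
  set Q : Finset (Finset (Fin n)) := A.powerset.filter (fun S => S.card ≤ t) with hQ
  set U : Finset (Finset (Fin n)) :=
    (Finset.univ : Finset (Fin n)).powerset.filter (fun S => S.card ≤ t) with hU
  have hQU : Q ⊆ U := by
    intro S hS
    rw [hQ, Finset.mem_filter] at hS
    rw [hU, Finset.mem_filter, Finset.mem_powerset]
    exact ⟨Finset.subset_univ S, hS.2⟩
  have hDU : D ⊆ U := by
    intro S hS
    rw [hU, Finset.mem_filter, Finset.mem_powerset]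
    exact ⟨Finset.subset_univ S, hD S hS⟩
  have hdisj : Disjoint D Q := by
    refine Finset.disjoint_left.mpr ?_
    intro S hSD hSQ
    rw [hQ, Finset.mem_filter, Finset.mem_powerset] at hSQ
    obtain ⟨hSA, _⟩ := hSQ
    have himg : delWord x S ∈ D'.image (delWord x') := by
      rw [← hout]
      exact Finset.mem_image_of_mem _ hSD
    obtain ⟨S', _, heq⟩ := Finset.mem_image.mp himg
    have hkey : delW (ψ ∘ x) S = delW (ψ ∘ x') S' := by
      rw [delW_map, delW_map, ← delWord_eq_delW, ← delWord_eq_delW, heq]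
    have hwS : w <+ delW (ψ ∘ x) S := by
      rw [← hE]
      exact delW_anti (ψ ∘ x) (hSA.trans hAE)
    have : w <+ List.ofFn (ψ ∘ x') := by
      rw [hkey] at hwS
      exact hwS.trans (delW_sublist_ofFn (ψ ∘ x') S')
    exact hw2 this
  have hcount : D.card + Q.card ≤ U.card := by
    rw [← Finset.card_union_of_disjoint hdisj]
    exact Finset.card_le_card (Finset.union_subset hDU hQU)
  have hQcard : Q.card = V₂ m t := by
    rw [hQ, card_small_subsets, hAcard]
  have hUcard : U.card = V₂ n t := by
    rw [hU, card_small_subsets]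
    congr 1
    simp
  rw [hDcard, hQcard, hUcard] at hcount
  omega

/-- The uniqueness bound for deletion vectors of weight at most `t` extends to
arbitrary alphabet size `q ≥ 2`. -/
theorem deletion_vectors_at_most_t_uniqueness_qary
    (q t n : ℕ) (hq : 2 ≤ q) (ht : 1 ≤ t) (hn : 2 * t + 2 ≤ n)
    (x x' : Fin n → Fin q) (hne : x ≠ x')
    (N : ℕ) (D D' : Finset (Finset (Fin n)))
    (hD : ∀ S ∈ D, S.card ≤ t) (hD' : ∀ S ∈ D', S.card ≤ t)
    (hDcard : D.card = N) (hD'card : D'.card = N)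
    (hout : D.image (delWord x) = D'.image (delWord x')) :
    N ≤ V₂ n t - V₂ ((n + 1) / 2 - 1) t := by
  obtain ⟨i₀, hi₀⟩ := Function.ne_iff.mp hne
  have hnpos : 0 < n := i₀.pos
  set ψ : Fin q → Bool := fun c => decide (c = x' i₀) with hψ
  have hψne : ψ (x i₀) ≠ ψ (x' i₀) := by
    simp [hψ, hi₀]
  have hfne : List.ofFn (ψ ∘ x) ≠ List.ofFn (ψ ∘ x') := by
    intro h
    rw [List.ofFn_inj] at h
    exact hψne (congrFun h i₀)
  have hflen : (List.ofFn (ψ ∘ x)).length = (List.ofFn (ψ ∘ x')).length := by simp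
  obtain ⟨b, u, u', h1, h2, h3, h4, h5⟩ := wit_main _ _ hflen hfne
  have h5' : u.length + u'.length ≤ n := by simpa using h5
  rcases le_total (u.length) (u'.length) with hle | hle
  · refine aux_bound x x' D D' hD hDcard hout ψ (b :: u) h1 h2 ?_
    simp only [length_cons]
    omega
  · refine aux_bound x' x D' D hD' hD'card hout.symm ψ ((!b) :: u') h3 h4 ?_
    simp only [length_cons]
    omega
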